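/- For the Schur–Weyl measure on Young diagrams with s' boxes and at most d rows given by p_λ = (det Γ)^{-1} · (s')!/(λ̃₁!···λ̃_d!) · d^{-s'} · ∏_{i<j}(λ̃_i − λ̃_j)², where λ̃_j := λ_j + d − j and det Γ = ∏_{j=1}^{d−1} j!, the probability that some row deviates from s'/d by more than (s')^{(1+x)/2}/2 is at most (s'+1)^{d(d−1)/2} · exp(−(s')^x /2) for x > 0, i.e. vanishes faster than any polynomial in s' as s' → ∞. -/

import Mathlib

/-- The Schur–Weyl distribution on Young diagrams `l` with `s` boxes and at most `d` rows:
`p_λ = (det Γ)⁻¹ · s!/(λ̃₁!⋯λ̃_d!) · d^{−s} · ∏_{i<j}(λ̃ᵢ − λ̃ⱼ)²` with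
`λ̃ᵢ = λᵢ + d − 1 − i` (rows indexed from `0`) and `det Γ = ∏_{j<d} j!`. -/
noncomputable def schurWeylProb (d s : ℕ) (l : Fin d → ℕ) : ℝ :=
  (∏ j ∈ Finset.range d, (Nat.factorial j : ℝ))⁻¹ *
    ((Nat.factorial s : ℝ) / ∏ i : Fin d, (Nat.factorial (l i + (d - 1 - (i : ℕ))) : ℝ)) *
    ((d : ℝ) ^ s)⁻¹ *
    ∏ i : Fin d, ∏ j ∈ Finset.Ioi i,
      (((l i : ℝ) + ((d - 1 - (i : ℕ) : ℕ) : ℝ)) - ((l j : ℝ) + ((d - 1 - (j : ℕ) : ℕ) : ℝ))) ^ 2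

open Finset

private lemma sw_hoeffding (p : ℝ) (hp0 : 0 ≤ p) (hp1 : p ≤ 1) (y : ℝ) :
    1 - p + p * Real.exp y ≤ Real.exp (p * y + y ^ 2 / 8) := by
  have hu : ∀ z : ℝ, 0 < 1 - p + p * Real.exp z := by
    intro z
    rcases eq_or_lt_of_le hp0 with h | h
    · simp [← h]
    · nlinarith [Real.exp_pos z]
  set u : ℝ → ℝ := fun z => 1 - p + p * Real.exp z with hu_def
  set φ : ℝ → ℝ := fun z => p + z / 4 - p * Real.exp z / u z with hφ
  set F : ℝ → ℝ := fun z => p * z + z ^ 2 / 8 - Real.log (u z) with hF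
  have hud : ∀ z, HasDerivAt u (p * Real.exp z) z := by
    intro z
    exact ((Real.hasDerivAt_exp z).const_mul p).const_add (1 - p)
  have hFd : ∀ z, HasDerivAt F (φ z) z := by
    intro z
    have h2 : HasDerivAt (fun z => Real.log (u z)) (p * Real.exp z / u z) z :=
      (hud z).log (hu z).ne'
    have h3 : HasDerivAt (fun z : ℝ => p * z + z ^ 2 / 8) (p + z / 4) z := by
      have := ((hasDerivAt_pow 2 z).div_const 8).const_add (p * z)
      have h4 : HasDerivAt (fun w : ℝ => p * w) p z := by
        simpa using (hasDerivAt_id z).const_mul p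
      have := h4.add ((hasDerivAt_pow 2 z).div_const 8)
      exact this.congr_deriv (by rw [show (2:ℕ) - 1 = 1 from rfl]; push_cast; ring)
    exact h3.sub h2
  have hφd : ∀ z, HasDerivAt φ
      (1 / 4 - (p * Real.exp z * u z - p * Real.exp z * (p * Real.exp z)) / (u z) ^ 2) z := by
    intro z
    have hq : HasDerivAt (fun z => p * Real.exp z / u z)
        ((p * Real.exp z * u z - p * Real.exp z * (p * Real.exp z)) / (u z) ^ 2) z :=
      HasDerivAt.div ((Real.hasDerivAt_exp z).const_mul p) (hud z) (hu z).ne'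
    have h5 : HasDerivAt (fun z : ℝ => p + z / 4) (1 / 4) z := by
      simpa using ((hasDerivAt_id z).div_const 4).const_add p
    exact h5.sub hq
  have hφmono : Monotone φ := by
    apply monotone_of_deriv_nonneg
    · exact fun z => (hφd z).differentiableAt
    · intro z
      rw [(hφd z).deriv]
      have h6 : 0 < (u z) ^ 2 := pow_pos (hu z) 2
      rw [sub_nonneg, div_le_iff₀ h6]
      have he := Real.exp_pos z
      have : (u z) ^ 2 - 4 * (p * Real.exp z * (1 - p)) = (1 - p - p * Real.exp z) ^ 2 := by
        simp only [hu_def]; ring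
      nlinarith [sq_nonneg (1 - p - p * Real.exp z)]
  have hφ0 : φ 0 = 0 := by
    simp only [hφ, hu_def, Real.exp_zero, mul_one]
    field_simp
    ring
  have hF0 : F 0 = 0 := by
    simp [hF, hu_def]
  have hFy : 0 ≤ F y := by
    rcases le_total 0 y with hy | hy
    · have hmono : MonotoneOn F (Set.Ici (0 : ℝ)) := by
        apply monotoneOn_of_deriv_nonneg (convex_Ici 0)
        · exact (Differentiable.continuous fun z => (hFd z).differentiableAt).continuousOn
        · exact fun z _ => ((hFd z).differentiableAt).differentiableWithinAt
        · intro z hz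
          rw [(hFd z).deriv]
          rw [interior_Ici] at hz
          have := hφmono (le_of_lt hz)
          rw [hφ0] at this
          exact this
      have := hmono Set.self_mem_Ici (Set.mem_Ici.2 hy) hy
      rwa [hF0] at this
    · have hanti : AntitoneOn F (Set.Iic (0 : ℝ)) := by
        apply antitoneOn_of_deriv_nonpos (convex_Iic 0)
        · exact (Differentiable.continuous fun z => (hFd z).differentiableAt).continuousOn
        · exact fun z _ => ((hFd z).differentiableAt).differentiableWithinAt
        · intro z hz
          rw [(hFd z).deriv]
          rw [interior_Iic] at hz
          have := hφmono (le_of_lt hz)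
          rw [hφ0] at this
          exact this
      have := hanti (Set.mem_Iic.2 hy) Set.self_mem_Iic hy
      rwa [hF0] at this
  have : Real.log (u y) ≤ p * y + y ^ 2 / 8 := by
    simp only [hF] at hFy; linarith
  calc u y ≤ Real.exp (Real.log (u y)) := by rw [Real.exp_log (hu y)]
    _ ≤ Real.exp (p * y + y ^ 2 / 8) := Real.exp_le_exp.2 this


private noncomputable def swW (d s : ℕ) (k : Fin d → ℕ) : ℝ :=
  ((s.factorial : ℝ) / ∏ i : Fin d, ((k i).factorial : ℝ)) * ((d : ℝ) ^ s)⁻¹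

private lemma swW_nonneg (d s : ℕ) (k : Fin d → ℕ) : 0 ≤ swW d s k := by
  unfold swW; positivity

private lemma sw_tilt (d s : ℕ) (y : Fin d → ℝ) :
    ∑ k ∈ Finset.piAntidiag Finset.univ s,
      ((s.factorial : ℝ) / ∏ i : Fin d, ((k i).factorial : ℝ)) * ∏ i : Fin d, y i ^ k i
      = (∑ i : Fin d, y i) ^ s := by
  rw [Finset.sum_pow_eq_sum_piAntidiag (Finset.univ : Finset (Fin d)) y s]
  apply Finset.sum_congr rfl
  intro k hk
  rw [Finset.mem_piAntidiag] at hk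
  have hspec := Nat.multinomial_spec (Finset.univ : Finset (Fin d)) k
  rw [hk.1] at hspec
  have hcast : (∏ i : Fin d, ((k i).factorial : ℝ)) * (Nat.multinomial Finset.univ k : ℝ)
      = (s.factorial : ℝ) := by
    rw [← Nat.cast_prod, ← Nat.cast_mul, hspec]
  have hne : (∏ i : Fin d, ((k i).factorial : ℝ)) ≠ 0 := by positivity
  have : ((s.factorial : ℝ) / ∏ i : Fin d, ((k i).factorial : ℝ))
      = (Nat.multinomial Finset.univ k : ℝ) := by
    field_simp [hne]; linarith [hcast]
  rw [this]

private lemma sw_sum_ite (d : ℕ) (i₀ : Fin d) (v : ℝ) :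
    ∑ i : Fin d, (if i = i₀ then v else 1) = v + ((d : ℝ) - 1) := by
  have : ∀ i : Fin d, (if i = i₀ then v else 1) = (if i = i₀ then v - 1 else 0) + 1 := by
    intro i; split <;> ring
  rw [Finset.sum_congr rfl (fun i _ => this i), Finset.sum_add_distrib,
    Finset.sum_ite_eq' Finset.univ i₀ (fun _ => v - 1)]
  simp [Finset.card_univ]
  ring

private lemma sw_prod_pow_ite (d : ℕ) (i₀ : Fin d) (v : ℝ) (k : Fin d → ℕ) :
    ∏ i : Fin d, (if i = i₀ then v else 1) ^ k i = v ^ k i₀ := by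
  have : ∀ i : Fin d, (if i = i₀ then v else 1) ^ k i
      = (if i = i₀ then v ^ k i else 1) := by
    intro i; split <;> simp
  rw [Finset.prod_congr rfl (fun i _ => this i),
    Finset.prod_ite_eq' Finset.univ i₀ (fun i => v ^ k i)]
  simp

private lemma sw_tail_up (d s : ℕ) (hd : 1 ≤ d) (t θ : ℝ) (hθ : 0 ≤ θ) (i₀ : Fin d) :
    ∑ k ∈ (Finset.piAntidiag (Finset.univ : Finset (Fin d)) s).filter
        (fun k => (s : ℝ) / d + t < k i₀), swW d s k
      ≤ Real.exp (-(θ * t) + s * θ ^ 2 / 8) := by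
  have hd0 : (0:ℝ) < d := by exact_mod_cast hd
  set a : ℝ := (s : ℝ) / d + t with ha
  have step1 : ∑ k ∈ (Finset.piAntidiag (Finset.univ : Finset (Fin d)) s).filter
        (fun k => (s : ℝ) / d + t < k i₀), swW d s k
      ≤ ∑ k ∈ Finset.piAntidiag (Finset.univ : Finset (Fin d)) s,
        swW d s k * Real.exp (θ * ((k i₀ : ℝ) - a)) := by
    apply le_trans (Finset.sum_le_sum (f := swW d s)
      (g := fun k => swW d s k * Real.exp (θ * ((k i₀ : ℝ) - a))) ?_)
    · exact Finset.sum_le_sum_of_subset_of_nonneg (Finset.filter_subset _ _)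
        (fun k _ _ => mul_nonneg (swW_nonneg d s k) (Real.exp_pos _).le)
    · intro k hk
      rw [Finset.mem_filter] at hk
      have h1 : (1:ℝ) ≤ Real.exp (θ * ((k i₀ : ℝ) - a)) := by
        rw [Real.one_le_exp_iff]
        have : (0:ℝ) ≤ (k i₀ : ℝ) - a := by rw [ha]; linarith [hk.2]
        exact mul_nonneg hθ this
      exact le_mul_of_one_le_right (swW_nonneg d s k) h1
  have step2 : ∑ k ∈ Finset.piAntidiag (Finset.univ : Finset (Fin d)) s,
        swW d s k * Real.exp (θ * ((k i₀ : ℝ) - a))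
      = Real.exp (-(θ * a)) * ((d : ℝ) ^ s)⁻¹ * (Real.exp θ + ((d:ℝ) - 1)) ^ s := by
    rw [← sw_sum_ite d i₀ (Real.exp θ), ← sw_tilt d s]
    rw [Finset.mul_sum]
    apply Finset.sum_congr rfl
    intro k hk
    rw [sw_prod_pow_ite d i₀ (Real.exp θ) k]
    unfold swW
    rw [← Real.exp_nat_mul, mul_comm ((k i₀ : ℝ)) θ, mul_sub, Real.exp_sub, Real.exp_neg]
    field_simp [Real.exp_ne_zero]
  have step3 : Real.exp (-(θ * a)) * (((d : ℝ) ^ s)⁻¹ * (Real.exp θ + ((d:ℝ) - 1)) ^ s)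
      ≤ Real.exp (-(θ * t) + s * θ ^ 2 / 8) := by
    have hsplit : ((d : ℝ) ^ s)⁻¹ * (Real.exp θ + ((d:ℝ) - 1)) ^ s
        = ((Real.exp θ + ((d:ℝ) - 1)) / d) ^ s := by
      rw [div_pow]; ring
    have heq : (Real.exp θ + ((d:ℝ) - 1)) / d = 1 - 1/d + (1/d) * Real.exp θ := by
      field_simp; ring
    have hb := sw_hoeffding (1/d) (by positivity) (by
      rw [div_le_one hd0]; exact_mod_cast hd) θ
    have hpow : ((Real.exp θ + ((d:ℝ) - 1)) / d) ^ s
        ≤ Real.exp ((1/d) * θ + θ ^ 2 / 8) ^ s := by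
      apply pow_le_pow_left₀ ?_ (by rw [heq]; exact hb)
      rw [heq]
      have h1d : (0:ℝ) ≤ 1/d := by positivity
      have := Real.exp_pos θ
      have h1d1 : (1:ℝ)/d ≤ 1 := by rw [div_le_one hd0]; exact_mod_cast hd
      nlinarith
    calc Real.exp (-(θ * a)) * (((d : ℝ) ^ s)⁻¹ * (Real.exp θ + ((d:ℝ) - 1)) ^ s)
        ≤ Real.exp (-(θ * a)) * Real.exp ((1/d) * θ + θ ^ 2 / 8) ^ s := by
          rw [hsplit]
          exact mul_le_mul_of_nonneg_left hpow (le_of_lt (Real.exp_pos _))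
      _ = Real.exp (-(θ * a) + s * ((1/d) * θ + θ ^ 2 / 8)) := by
          rw [← Real.exp_nat_mul, ← Real.exp_add]
      _ = Real.exp (-(θ * t) + s * θ ^ 2 / 8) := by
          congr 1
          rw [ha]
          field_simp
          ring
    -- fix associativity
  calc ∑ k ∈ (Finset.piAntidiag (Finset.univ : Finset (Fin d)) s).filter
        (fun k => (s : ℝ) / d + t < k i₀), swW d s k
      ≤ Real.exp (-(θ * a)) * (((d : ℝ) ^ s)⁻¹ * (Real.exp θ + ((d:ℝ) - 1)) ^ s) := by
        rw [← mul_assoc, ← step2]; exact step1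
    _ ≤ _ := step3

private lemma sw_tail_low (d s : ℕ) (hd : 1 ≤ d) (t θ : ℝ) (hθ : 0 ≤ θ) (i₀ : Fin d) :
    ∑ k ∈ (Finset.piAntidiag (Finset.univ : Finset (Fin d)) s).filter
        (fun k => (k i₀ : ℝ) < (s : ℝ) / d - t), swW d s k
      ≤ Real.exp (-(θ * t) + s * θ ^ 2 / 8) := by
  have hd0 : (0:ℝ) < d := by exact_mod_cast hd
  set a : ℝ := (s : ℝ) / d - t with ha
  have step1 : ∑ k ∈ (Finset.piAntidiag (Finset.univ : Finset (Fin d)) s).filter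
        (fun k => (k i₀ : ℝ) < (s : ℝ) / d - t), swW d s k
      ≤ ∑ k ∈ Finset.piAntidiag (Finset.univ : Finset (Fin d)) s,
        swW d s k * Real.exp (θ * (a - (k i₀ : ℝ))) := by
    apply le_trans (Finset.sum_le_sum (f := swW d s)
      (g := fun k => swW d s k * Real.exp (θ * (a - (k i₀ : ℝ)))) ?_)
    · exact Finset.sum_le_sum_of_subset_of_nonneg (Finset.filter_subset _ _)
        (fun k _ _ => mul_nonneg (swW_nonneg d s k) (Real.exp_pos _).le)
    · intro k hk
      rw [Finset.mem_filter] at hk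
      have h1 : (1:ℝ) ≤ Real.exp (θ * (a - (k i₀ : ℝ))) := by
        rw [Real.one_le_exp_iff]
        have : (0:ℝ) ≤ a - (k i₀ : ℝ) := by rw [ha]; linarith [hk.2]
        exact mul_nonneg hθ this
      exact le_mul_of_one_le_right (swW_nonneg d s k) h1
  have step2 : ∑ k ∈ Finset.piAntidiag (Finset.univ : Finset (Fin d)) s,
        swW d s k * Real.exp (θ * (a - (k i₀ : ℝ)))
      = Real.exp (θ * a) * ((d : ℝ) ^ s)⁻¹ * (Real.exp (-θ) + ((d:ℝ) - 1)) ^ s := by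
    rw [← sw_sum_ite d i₀ (Real.exp (-θ)), ← sw_tilt d s]
    rw [Finset.mul_sum]
    apply Finset.sum_congr rfl
    intro k hk
    rw [sw_prod_pow_ite d i₀ (Real.exp (-θ)) k]
    unfold swW
    rw [← Real.exp_nat_mul, mul_sub, Real.exp_sub]
    have hneg : (↑(k i₀) : ℝ) * -θ = -(θ * (k i₀ : ℝ)) := by ring
    rw [hneg, Real.exp_neg]
    field_simp [Real.exp_ne_zero]
  have step3 : Real.exp (θ * a) * (((d : ℝ) ^ s)⁻¹ * (Real.exp (-θ) + ((d:ℝ) - 1)) ^ s)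
      ≤ Real.exp (-(θ * t) + s * θ ^ 2 / 8) := by
    have hsplit : ((d : ℝ) ^ s)⁻¹ * (Real.exp (-θ) + ((d:ℝ) - 1)) ^ s
        = ((Real.exp (-θ) + ((d:ℝ) - 1)) / d) ^ s := by
      rw [div_pow]; ring
    have heq : (Real.exp (-θ) + ((d:ℝ) - 1)) / d = 1 - 1/d + (1/d) * Real.exp (-θ) := by
      field_simp; ring
    have hb := sw_hoeffding (1/d) (by positivity) (by
      rw [div_le_one hd0]; exact_mod_cast hd) (-θ)
    have hexp : (1/(d:ℝ)) * (-θ) + (-θ) ^ 2 / 8 = -((1/d) * θ) + θ ^ 2 / 8 := by ring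
    rw [hexp] at hb
    have hpow : ((Real.exp (-θ) + ((d:ℝ) - 1)) / d) ^ s
        ≤ Real.exp (-((1/d) * θ) + θ ^ 2 / 8) ^ s := by
      apply pow_le_pow_left₀ ?_ (by rw [heq]; exact hb)
      rw [heq]
      have h1d : (0:ℝ) ≤ 1/d := by positivity
      have := Real.exp_pos (-θ)
      have h1d1 : (1:ℝ)/d ≤ 1 := by rw [div_le_one hd0]; exact_mod_cast hd
      nlinarith
    calc Real.exp (θ * a) * (((d : ℝ) ^ s)⁻¹ * (Real.exp (-θ) + ((d:ℝ) - 1)) ^ s)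
        ≤ Real.exp (θ * a) * Real.exp (-((1/d) * θ) + θ ^ 2 / 8) ^ s := by
          rw [hsplit]
          exact mul_le_mul_of_nonneg_left hpow (le_of_lt (Real.exp_pos _))
      _ = Real.exp (θ * a + s * (-((1/d) * θ) + θ ^ 2 / 8)) := by
          rw [← Real.exp_nat_mul, ← Real.exp_add]
      _ = Real.exp (-(θ * t) + s * θ ^ 2 / 8) := by
          congr 1
          rw [ha]
          field_simp
          ring
  calc ∑ k ∈ (Finset.piAntidiag (Finset.univ : Finset (Fin d)) s).filter
        (fun k => (k i₀ : ℝ) < (s : ℝ) / d - t), swW d s k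
      ≤ Real.exp (θ * a) * (((d : ℝ) ^ s)⁻¹ * (Real.exp (-θ) + ((d:ℝ) - 1)) ^ s) := by
        rw [← mul_assoc, ← step2]; exact step1
    _ ≤ _ := step3

private lemma sw_prod_fact (m q : ℕ) :
    (q.factorial : ℝ) * ∏ c ∈ Finset.range m, ((q : ℝ) + ((c : ℝ) + 1))
      = ((q + m).factorial : ℝ) := by
  induction m with
  | zero => simp
  | succ n ih =>
    rw [Finset.prod_range_succ, ← mul_assoc, ih, ← Nat.add_assoc, Nat.factorial_succ]
    push_cast
    ring

private lemma sw_row_reindex (d : ℕ) (i : Fin d) (h : ℕ → ℝ) :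
    ∏ j ∈ Finset.Ioi i, h ((j : ℕ) - (i : ℕ))
      = ∏ c ∈ Finset.range (d - 1 - (i : ℕ)), h (c + 1) := by
  have hd0 : 0 < d := i.pos
  refine Finset.prod_nbij' (i := fun (j : Fin d) => (j : ℕ) - (i : ℕ) - 1)
    (j := fun (c : ℕ) => (⟨((i : ℕ) + c + 1) % d, Nat.mod_lt _ hd0⟩ : Fin d)) ?_ ?_ ?_ ?_ ?_
  · intro j hj
    simp only [Finset.mem_Ioi, Fin.lt_def] at hj
    simp only [Finset.mem_range]
    have := j.isLt
    omega
  · intro c hc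
    simp only [Finset.mem_range] at hc
    simp only [Finset.mem_Ioi, Fin.lt_def]
    have hlt : (i : ℕ) + c + 1 < d := by omega
    simp only [Nat.mod_eq_of_lt hlt]
    omega
  · intro j hj
    simp only [Finset.mem_Ioi, Fin.lt_def] at hj
    apply Fin.ext
    have := j.isLt
    have hval : (i : ℕ) + ((j : ℕ) - (i : ℕ) - 1) + 1 = (j : ℕ) := by omega
    simp only [hval, Nat.mod_eq_of_lt this]
  · intro c hc
    simp only [Finset.mem_range] at hc
    have hlt : (i : ℕ) + c + 1 < d := by omega
    simp only [Nat.mod_eq_of_lt hlt]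
    omega
  · intro j hj
    simp only [Finset.mem_Ioi, Fin.lt_def] at hj
    show h ((j : ℕ) - (i : ℕ)) = h ((j : ℕ) - (i : ℕ) - 1 + 1)
    congr 1
    omega

private lemma sw_core (d s : ℕ) (hd : 1 ≤ d) (l : Fin d → ℕ)
    (hsort : ∀ i j : Fin d, i ≤ j → l j ≤ l i) (hsum : ∑ i, l i = s)
    (c : Fin d → ℝ) (hcnn : ∀ i, 0 ≤ c i)
    (hc : ∀ i : Fin d,
      (∏ j ∈ Finset.Ioi i, (((l i : ℝ) + ((d - 1 - (i : ℕ) : ℕ) : ℝ))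
          - ((l j : ℝ) + ((d - 1 - (j : ℕ) : ℕ) : ℝ))))
        ≤ c i * ∏ j ∈ Finset.Ioi i, ((((j : ℕ) : ℝ) - ((i : ℕ) : ℝ)) * ((s : ℝ) + 1))) :
    schurWeylProb d s l ≤ (∏ i, c i) * (((s : ℝ) + 1) ^ (d * (d - 1) / 2) * swW d s l) := by
  classical
  have hls : ∀ i, l i ≤ s := by
    intro i
    rw [← hsum]
    exact Finset.single_le_sum (fun j _ => Nat.zero_le _) (Finset.mem_univ i)
  have hcast : ∀ i : Fin d, ((d - 1 - (i : ℕ) : ℕ) : ℝ) = (d : ℝ) - 1 - ((i : ℕ) : ℝ) := by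
    intro i
    have h1 : (i : ℕ) ≤ d - 1 := by have := i.isLt; omega
    rw [Nat.cast_sub h1, Nat.cast_sub hd]
    norm_num
  have hdiff : ∀ i j : Fin d,
      (((l i : ℝ) + ((d - 1 - (i : ℕ) : ℕ) : ℝ)) - ((l j : ℝ) + ((d - 1 - (j : ℕ) : ℕ) : ℝ)))
      = ((l i : ℝ) - (l j : ℝ)) + (((j : ℕ) : ℝ) - ((i : ℕ) : ℝ)) := by
    intro i j
    rw [hcast i, hcast j]
    ring
  have hDnn : ∀ i j : Fin d, i < j →
      0 ≤ (((l i : ℝ) + ((d - 1 - (i : ℕ) : ℕ) : ℝ)) - ((l j : ℝ) + ((d - 1 - (j : ℕ) : ℕ) : ℝ))) := by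
    intro i j hij
    rw [hdiff i j]
    have h1 : (l j : ℝ) ≤ l i := by exact_mod_cast hsort i j (le_of_lt hij)
    have h2 : ((i : ℕ) : ℝ) ≤ ((j : ℕ) : ℝ) := by
      exact_mod_cast (Fin.lt_def.mp hij).le
    linarith
  set V : ℝ := ∏ i : Fin d, ∏ j ∈ Finset.Ioi i,
    (((l i : ℝ) + ((d - 1 - (i : ℕ) : ℕ) : ℝ)) - ((l j : ℝ) + ((d - 1 - (j : ℕ) : ℕ) : ℝ))) with hV
  have hrowNN : ∀ i : Fin d, 0 ≤ ∏ j ∈ Finset.Ioi i,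
      (((l i : ℝ) + ((d - 1 - (i : ℕ) : ℕ) : ℝ)) - ((l j : ℝ) + ((d - 1 - (j : ℕ) : ℕ) : ℝ))) := by
    intro i
    exact Finset.prod_nonneg fun j hj => hDnn i j (Finset.mem_Ioi.mp hj)
  have hVnn : 0 ≤ V := Finset.prod_nonneg fun i _ => hrowNN i
  have hVV : (∏ i : Fin d, ∏ j ∈ Finset.Ioi i,
      (((l i : ℝ) + ((d - 1 - (i : ℕ) : ℕ) : ℝ)) - ((l j : ℝ) + ((d - 1 - (j : ℕ) : ℕ) : ℝ))) ^ 2)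
      = V ^ 2 := by
    rw [hV, ← Finset.prod_pow]
    exact Finset.prod_congr rfl fun i _ => by rw [← Finset.prod_pow]
  -- Bound A
  have hrowA : ∀ i : Fin d, (∏ j ∈ Finset.Ioi i,
      (((l i : ℝ) + ((d - 1 - (i : ℕ) : ℕ) : ℝ)) - ((l j : ℝ) + ((d - 1 - (j : ℕ) : ℕ) : ℝ))))
      ≤ ((l i + (d - 1 - (i : ℕ))).factorial : ℝ) / ((l i).factorial : ℝ) := by
    intro i
    have step : (∏ j ∈ Finset.Ioi i,
        (((l i : ℝ) + ((d - 1 - (i : ℕ) : ℕ) : ℝ)) - ((l j : ℝ) + ((d - 1 - (j : ℕ) : ℕ) : ℝ))))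
        ≤ ∏ j ∈ Finset.Ioi i, ((l i : ℝ) + ((((j : ℕ) - (i : ℕ) : ℕ)) : ℝ)) := by
      apply Finset.prod_le_prod
      · intro j hj; exact hDnn i j (Finset.mem_Ioi.mp hj)
      · intro j hj
        have hij := Finset.mem_Ioi.mp hj
        rw [hdiff i j]
        have h2 : (((j : ℕ) - (i : ℕ) : ℕ) : ℝ) = ((j : ℕ) : ℝ) - ((i : ℕ) : ℝ) := by
          rw [Nat.cast_sub (Fin.lt_def.mp hij).le]
        rw [h2]
        have h1 : (0 : ℝ) ≤ (l j : ℝ) := by positivity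
        linarith
    refine le_trans step ?_
    rw [sw_row_reindex d i (fun m => (l i : ℝ) + (m : ℝ))]
    have hposf : (0 : ℝ) < ((l i).factorial : ℝ) := by positivity
    rw [le_div_iff₀ hposf, mul_comm, ← sw_prod_fact (d - 1 - (i : ℕ)) (l i)]
    apply le_of_eq
    congr 1
    apply Finset.prod_congr rfl
    intro cc _
    push_cast
    ring
  -- Bound B rows evaluated
  have hrowB : ∀ i : Fin d,
      (∏ j ∈ Finset.Ioi i, ((((j : ℕ) : ℝ) - ((i : ℕ) : ℝ)) * ((s : ℝ) + 1)))
      = (((d - 1 - (i : ℕ)).factorial : ℝ)) * ((s : ℝ) + 1) ^ (d - 1 - (i : ℕ)) := by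
    intro i
    have step : (∏ j ∈ Finset.Ioi i, ((((j : ℕ) : ℝ) - ((i : ℕ) : ℝ)) * ((s : ℝ) + 1)))
        = ∏ j ∈ Finset.Ioi i, (((((j : ℕ) - (i : ℕ) : ℕ)) : ℝ) * ((s : ℝ) + 1)) := by
      apply Finset.prod_congr rfl
      intro j hj
      have hij := Finset.mem_Ioi.mp hj
      rw [Nat.cast_sub (Fin.lt_def.mp hij).le]
    rw [step, sw_row_reindex d i (fun m => (m : ℝ) * ((s : ℝ) + 1)), Finset.prod_mul_distrib,
      Finset.prod_const, Finset.card_range]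
    congr 1
    have := sw_prod_fact (d - 1 - (i : ℕ)) 0
    simp only [Nat.factorial_zero, Nat.cast_one, one_mul, Nat.zero_add, Nat.cast_zero, zero_add]
      at this
    rw [← this]
    apply Finset.prod_congr rfl
    intro cc _
    push_cast
    ring
  -- Total B product
  have hBtot : (∏ i : Fin d, ((((d - 1 - (i : ℕ)).factorial : ℝ))
        * ((s : ℝ) + 1) ^ (d - 1 - (i : ℕ))))
      = (∏ j ∈ Finset.range d, (Nat.factorial j : ℝ)) * ((s : ℝ) + 1) ^ (d * (d - 1) / 2) := by
    rw [Finset.prod_mul_distrib]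
    congr 1
    · rw [Fin.prod_univ_eq_prod_range (fun m => (((d - 1 - m).factorial : ℝ)))]
      have := Finset.prod_range_reflect (fun j => ((j.factorial : ℝ))) d
      rw [← this]
    · rw [Fin.prod_univ_eq_prod_range (fun m => ((s : ℝ) + 1) ^ (d - 1 - m)),
        Finset.prod_pow_eq_pow_sum]
      congr 1
      have h1 := Finset.sum_range_reflect (fun j => j) d
      have h2 : ∀ j ∈ Finset.range d, d - 1 - j = (fun j => j) (d - 1 - j) := fun j _ => rfl
      calc ∑ j ∈ Finset.range d, (d - 1 - j) = ∑ j ∈ Finset.range d, j := by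
            rw [← h1]
        _ = d * (d - 1) / 2 := Finset.sum_range_id d
  -- V ≤ A and V ≤ B
  have hVA : V ≤ ∏ i : Fin d, (((l i + (d - 1 - (i : ℕ))).factorial : ℝ) / ((l i).factorial : ℝ)) := by
    rw [hV]
    exact Finset.prod_le_prod (fun i _ => hrowNN i) (fun i _ => hrowA i)
  have hVB : V ≤ (∏ i, c i) * ((∏ j ∈ Finset.range d, (Nat.factorial j : ℝ))
      * ((s : ℝ) + 1) ^ (d * (d - 1) / 2)) := by
    rw [hV, ← hBtot, ← Finset.prod_mul_distrib]
    apply Finset.prod_le_prod (fun i _ => hrowNN i)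
    intro i _
    rw [← hrowB i]
    exact hc i
  -- combine
  have hAnn : 0 ≤ ∏ i : Fin d, (((l i + (d - 1 - (i : ℕ))).factorial : ℝ) / ((l i).factorial : ℝ)) :=
    Finset.prod_nonneg fun i _ => by positivity
  have hV2 : V ^ 2 ≤ (∏ i : Fin d, (((l i + (d - 1 - (i : ℕ))).factorial : ℝ) / ((l i).factorial : ℝ)))
      * ((∏ i, c i) * ((∏ j ∈ Finset.range d, (Nat.factorial j : ℝ))
        * ((s : ℝ) + 1) ^ (d * (d - 1) / 2))) := by
    rw [pow_two]
    exact mul_le_mul hVA hVB hVnn hAnn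
  -- final algebra
  unfold schurWeylProb swW
  rw [hVV]
  have hK : (0 : ℝ) < ∏ j ∈ Finset.range d, (Nat.factorial j : ℝ) := by positivity
  have hP : (0 : ℝ) < ∏ i : Fin d, (Nat.factorial (l i + (d - 1 - (i : ℕ))) : ℝ) := by positivity
  have hLf : (0 : ℝ) < ∏ i : Fin d, ((l i).factorial : ℝ) := by positivity
  have hds : (0 : ℝ) < (d : ℝ) ^ s := by
    have : (0:ℝ) < (d : ℝ) := by exact_mod_cast hd
    positivity
  have hpre : (0 : ℝ) ≤ (∏ j ∈ Finset.range d, (Nat.factorial j : ℝ))⁻¹ *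
      ((Nat.factorial s : ℝ) / ∏ i : Fin d, (Nat.factorial (l i + (d - 1 - (i : ℕ))) : ℝ)) *
      ((d : ℝ) ^ s)⁻¹ := by positivity
  calc (∏ j ∈ Finset.range d, (Nat.factorial j : ℝ))⁻¹ *
      ((Nat.factorial s : ℝ) / ∏ i : Fin d, (Nat.factorial (l i + (d - 1 - (i : ℕ))) : ℝ)) *
      ((d : ℝ) ^ s)⁻¹ * V ^ 2
      ≤ (∏ j ∈ Finset.range d, (Nat.factorial j : ℝ))⁻¹ *
      ((Nat.factorial s : ℝ) / ∏ i : Fin d, (Nat.factorial (l i + (d - 1 - (i : ℕ))) : ℝ)) *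
      ((d : ℝ) ^ s)⁻¹ *
      ((∏ i : Fin d, (((l i + (d - 1 - (i : ℕ))).factorial : ℝ) / ((l i).factorial : ℝ)))
      * ((∏ i, c i) * ((∏ j ∈ Finset.range d, (Nat.factorial j : ℝ))
        * ((s : ℝ) + 1) ^ (d * (d - 1) / 2)))) := by
        exact mul_le_mul_of_nonneg_left hV2 hpre
    _ = (∏ i, c i) * (((s : ℝ) + 1) ^ (d * (d - 1) / 2) *
        (((s.factorial : ℝ) / ∏ i : Fin d, ((l i).factorial : ℝ)) * ((d : ℝ) ^ s)⁻¹)) := by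
        rw [Finset.prod_div_distrib]
        field_simp

private lemma sw_cast (d : ℕ) (hd : 1 ≤ d) (i : Fin d) :
    ((d - 1 - (i : ℕ) : ℕ) : ℝ) = (d : ℝ) - 1 - ((i : ℕ) : ℝ) := by
  have h1 : (i : ℕ) ≤ d - 1 := by have := i.isLt; omega
  rw [Nat.cast_sub h1, Nat.cast_sub hd]
  norm_num

private lemma sw_ls (d s : ℕ) (l : Fin d → ℕ) (hsum : ∑ i, l i = s) (i : Fin d) : l i ≤ s := by
  rw [← hsum]
  exact Finset.single_le_sum (fun j _ => Nat.zero_le _) (Finset.mem_univ i)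

private lemma sw_factor_nonneg (d s : ℕ) (hd : 1 ≤ d) (l : Fin d → ℕ)
    (hsort : ∀ i j : Fin d, i ≤ j → l j ≤ l i)
    {i j : Fin d} (hij : i < j) :
    0 ≤ ((l i : ℝ) + ((d - 1 - (i : ℕ) : ℕ) : ℝ)) - ((l j : ℝ) + ((d - 1 - (j : ℕ) : ℕ) : ℝ)) := by
  rw [sw_cast d hd i, sw_cast d hd j]
  have h1 : (l j : ℝ) ≤ l i := by exact_mod_cast hsort i j (le_of_lt hij)
  have h2 : ((i : ℕ) : ℝ) ≤ ((j : ℕ) : ℝ) := by exact_mod_cast (Fin.lt_def.mp hij).le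
  linarith

private lemma sw_factor_le (d s : ℕ) (hd : 1 ≤ d) (l : Fin d → ℕ)
    (hsum : ∑ i, l i = s) {i j : Fin d} (hij : i < j) :
    ((l i : ℝ) + ((d - 1 - (i : ℕ) : ℕ) : ℝ)) - ((l j : ℝ) + ((d - 1 - (j : ℕ) : ℕ) : ℝ))
      ≤ (((j : ℕ) : ℝ) - ((i : ℕ) : ℝ)) * ((s : ℝ) + 1) := by
  rw [sw_cast d hd i, sw_cast d hd j]
  have hls : (l i : ℝ) ≤ s := by exact_mod_cast sw_ls d s l hsum i
  have hlj : (0 : ℝ) ≤ (l j : ℝ) := by positivity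
  have hgap : (1 : ℝ) ≤ ((j : ℕ) : ℝ) - ((i : ℕ) : ℝ) := by
    have := Fin.lt_def.mp hij
    have : ((i : ℕ) : ℝ) + 1 ≤ ((j : ℕ) : ℝ) := by exact_mod_cast this
    linarith
  have hs0 : (0 : ℝ) ≤ (s : ℝ) := by positivity
  nlinarith

private lemma sw_pointwise (d s : ℕ) (hd : 1 ≤ d) (l : Fin d → ℕ)
    (hsort : ∀ i j : Fin d, i ≤ j → l j ≤ l i) (hsum : ∑ i, l i = s) :
    schurWeylProb d s l ≤ ((s : ℝ) + 1) ^ (d * (d - 1) / 2) * swW d s l := by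
  have h := sw_core d s hd l hsort hsum (fun _ => 1) (fun _ => zero_le_one) ?_
  · simpa using h
  · intro i
    rw [one_mul]
    apply Finset.prod_le_prod
    · intro j hj
      exact sw_factor_nonneg d s hd l hsort (Finset.mem_Ioi.mp hj)
    · intro j hj
      exact sw_factor_le d s hd l hsum (Finset.mem_Ioi.mp hj)

private lemma sw_half (d s : ℕ) (hd : 3 ≤ d) (l : Fin d → ℕ)
    (hsort : ∀ i j : Fin d, i ≤ j → l j ≤ l i) (hsum : ∑ i, l i = s)
    (i : Fin d) (h1 : (i : ℕ) = 1) : 2 * (l i : ℝ) ≤ (s : ℝ) := by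
  have hv0n : ((⟨0, by omega⟩ : Fin d) : ℕ) = 0 := rfl
  have hzero : i ≠ (⟨0, by omega⟩ : Fin d) := by
    intro hcon
    rw [Fin.ext_iff, hv0n] at hcon
    omega
  have hle0 : l i ≤ l ⟨0, by omega⟩ := by
    apply hsort
    rw [Fin.le_def, hv0n]
    omega
  have hsum2 : l ⟨0, by omega⟩ + l i ≤ s := by
    rw [← hsum]
    rw [← Finset.add_sum_erase Finset.univ l (Finset.mem_univ (⟨0, by omega⟩ : Fin d))]
    have : l i ≤ ∑ j ∈ Finset.univ.erase (⟨0, by omega⟩ : Fin d), l j := by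
      apply Finset.single_le_sum (fun j _ => Nat.zero_le _)
      rw [Finset.mem_erase]
      exact ⟨hzero, Finset.mem_univ i⟩
    omega
  have hc1 : (l ⟨0, by omega⟩ : ℝ) + (l i : ℝ) ≤ (s : ℝ) := by exact_mod_cast hsum2
  have h' : (l i : ℝ) ≤ (l ⟨0, by omega⟩ : ℝ) := by exact_mod_cast hle0
  linarith

private lemma sw_pointwise3 (d s : ℕ) (hd : 3 ≤ d) (l : Fin d → ℕ)
    (hsort : ∀ i j : Fin d, i ≤ j → l j ≤ l i) (hsum : ∑ i, l i = s) :
    schurWeylProb d s l ≤ (((s : ℝ) + 2) / (2 * ((s : ℝ) + 1))) ^ 2 *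
      (((s : ℝ) + 1) ^ (d * (d - 1) / 2) * swW d s l) := by
  classical
  have hd1 : 1 ≤ d := by omega
  set β : ℝ := ((s : ℝ) + 2) / (2 * ((s : ℝ) + 1)) with hβ
  have hβ0 : 0 ≤ β := by positivity
  set c : Fin d → ℝ := fun i => if (i : ℕ) ≤ 1 then β else 1 with hcdef
  have hcnn : ∀ i, 0 ≤ c i := by
    intro i; rw [hcdef]; dsimp only; split
    · exact hβ0
    · exact zero_le_one
  have h := sw_core d s hd1 l hsort hsum c hcnn ?_
  · refine le_trans h (le_of_eq ?_)
    congr 1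
    rw [hcdef]
    rw [Finset.prod_ite (fun _ => β) (fun _ => (1:ℝ))]
    rw [Finset.prod_const, Finset.prod_const_one, mul_one]
    have hfilt : Finset.univ.filter (fun i : Fin d => (i : ℕ) ≤ 1)
        = {(⟨0, by omega⟩ : Fin d), ⟨1, by omega⟩} := by
      ext i
      simp only [Finset.mem_filter, Finset.mem_univ, true_and, Finset.mem_insert,
        Finset.mem_singleton, Fin.ext_iff]
      omega
    rw [hfilt, Finset.card_insert_of_notMem (by simp [Fin.ext_iff]), Finset.card_singleton]
  · intro i
    rw [hcdef]
    dsimp only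
    by_cases hi : (i : ℕ) ≤ 1
    · rw [if_pos hi]
      set j₂ : Fin d := ⟨2, by omega⟩ with hj₂
      have hv2n : (j₂ : ℕ) = 2 := rfl
      have h2 : j₂ ∈ Finset.Ioi i := by
        rw [Finset.mem_Ioi, Fin.lt_def, hv2n]
        omega
      have key : ((l i : ℝ) + ((d - 1 - (i : ℕ) : ℕ) : ℝ))
          - ((l j₂ : ℝ) + ((d - 1 - (j₂ : ℕ) : ℕ) : ℝ))
          ≤ β * ((((j₂ : ℕ) : ℝ) - ((i : ℕ) : ℝ)) * ((s : ℝ) + 1)) := by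
        rw [sw_cast d hd1 i, sw_cast d hd1 j₂]
        have hv2 : ((j₂ : ℕ) : ℝ) = 2 := by rw [hv2n]; norm_num
        rw [hv2]
        have hls : (l i : ℝ) ≤ s := by exact_mod_cast sw_ls d s l hsum i
        have hlj : (0 : ℝ) ≤ (l j₂ : ℝ) := by positivity
        have hs1 : (0 : ℝ) < (s : ℝ) + 1 := by positivity
        have hcases : (i : ℕ) = 0 ∨ (i : ℕ) = 1 := by omega
        rcases hcases with h0 | h1
        · rw [h0]
          have : β * ((2 - ((0:ℕ) : ℝ)) * ((s : ℝ) + 1)) = (s : ℝ) + 2 := by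
            rw [hβ]; push_cast; field_simp; norm_num
          push_cast at this ⊢
          rw [this]
          linarith
        · rw [h1]
          have hval : β * ((2 - ((1:ℕ) : ℝ)) * ((s : ℝ) + 1)) = ((s : ℝ) + 2) / 2 := by
            rw [hβ]; push_cast; field_simp; ring
          push_cast at hval ⊢
          rw [hval]
          -- need 2 * l i ≤ s
          have h2li : 2 * (l i : ℝ) ≤ (s : ℝ) := sw_half d s hd l hsort hsum i (by omega)
          linarith
      have rest : ∏ j ∈ (Finset.Ioi i).erase j₂,
          (((l i : ℝ) + ((d - 1 - (i : ℕ) : ℕ) : ℝ)) - ((l j : ℝ) + ((d - 1 - (j : ℕ) : ℕ) : ℝ)))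
          ≤ ∏ j ∈ (Finset.Ioi i).erase j₂, ((((j : ℕ) : ℝ) - ((i : ℕ) : ℝ)) * ((s : ℝ) + 1)) := by
        apply Finset.prod_le_prod
        · intro j hj
          exact sw_factor_nonneg d s hd1 l hsort (Finset.mem_Ioi.mp (Finset.mem_of_mem_erase hj))
        · intro j hj
          exact sw_factor_le d s hd1 l hsum (Finset.mem_Ioi.mp (Finset.mem_of_mem_erase hj))
      calc (∏ j ∈ Finset.Ioi i,
          (((l i : ℝ) + ((d - 1 - (i : ℕ) : ℕ) : ℝ)) - ((l j : ℝ) + ((d - 1 - (j : ℕ) : ℕ) : ℝ))))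
          = (((l i : ℝ) + ((d - 1 - (i : ℕ) : ℕ) : ℝ))
              - ((l j₂ : ℝ) + ((d - 1 - (j₂ : ℕ) : ℕ) : ℝ))) *
            ∏ j ∈ (Finset.Ioi i).erase j₂,
              (((l i : ℝ) + ((d - 1 - (i : ℕ) : ℕ) : ℝ))
                - ((l j : ℝ) + ((d - 1 - (j : ℕ) : ℕ) : ℝ))) := by
            exact (Finset.mul_prod_erase (Finset.Ioi i)
              (fun j => (((l i : ℝ) + ((d - 1 - (i : ℕ) : ℕ) : ℝ))
                - ((l j : ℝ) + ((d - 1 - (j : ℕ) : ℕ) : ℝ)))) h2).symm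
        _ ≤ (β * ((((j₂ : ℕ) : ℝ) - ((i : ℕ) : ℝ)) * ((s : ℝ) + 1))) *
            ∏ j ∈ (Finset.Ioi i).erase j₂, ((((j : ℕ) : ℝ) - ((i : ℕ) : ℝ)) * ((s : ℝ) + 1)) := by
            apply mul_le_mul key rest
            · apply Finset.prod_nonneg
              intro j hj
              exact sw_factor_nonneg d s hd1 l hsort
                (Finset.mem_Ioi.mp (Finset.mem_of_mem_erase hj))
            · have hg2 : (0 : ℝ) ≤ (((j₂ : ℕ) : ℝ) - ((i : ℕ) : ℝ)) * ((s : ℝ) + 1) := by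
                have : ((i : ℕ) : ℝ) ≤ ((j₂ : ℕ) : ℝ) := by
                  have : (i : ℕ) ≤ (j₂ : ℕ) := by rw [hv2n]; omega
                  exact_mod_cast this
                have hs1 : (0 : ℝ) ≤ (s : ℝ) + 1 := by positivity
                nlinarith
              positivity
        _ = β * ∏ j ∈ Finset.Ioi i, ((((j : ℕ) : ℝ) - ((i : ℕ) : ℝ)) * ((s : ℝ) + 1)) := by
            have e2 := Finset.mul_prod_erase (Finset.Ioi i)
              (fun j : Fin d => ((((j : ℕ) : ℝ) - ((i : ℕ) : ℝ)) * ((s : ℝ) + 1))) h2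
            rw [← e2]
            ring
    · rw [if_neg hi, one_mul]
      apply Finset.prod_le_prod
      · intro j hj
        exact sw_factor_nonneg d s hd1 l hsort (Finset.mem_Ioi.mp hj)
      · intro j hj
        exact sw_factor_le d s hd1 l hsum (Finset.mem_Ioi.mp hj)
/-- **Concentration of the Schur–Weyl measure.** The probability that some row of the random
Young diagram deviates from `s/d` by more than `s^{(1+x)/2}/2` is at most
`(s+1)^{d(d−1)/2} · exp(−s^x/2)`. -/
theorem schurWeyl_concentration (d s : ℕ) (hd : 1 ≤ d) (hs : 1 ≤ s) (x : ℝ) (hx : 0 < x) :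
    ∑' lam : {l : Fin d → ℕ // (∀ i j : Fin d, i ≤ j → l j ≤ l i) ∧ (∑ i, l i) = s ∧
        ∃ i, |(l i : ℝ) - (s : ℝ) / (d : ℝ)| > (s : ℝ) ^ ((1 + x) / 2) / 2},
      schurWeylProb d s lam.1 ≤
      ((s : ℝ) + 1) ^ (d * (d - 1) / 2) * Real.exp (-(s : ℝ) ^ x / 2) := by
  classical
  have hs0 : (0 : ℝ) < (s : ℝ) := by exact_mod_cast hs
  set t : ℝ := (s : ℝ) ^ ((1 + x) / 2) / 2 with htdef
  have ht0 : 0 < t := by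
    rw [htdef]
    have := Real.rpow_pos_of_pos hs0 ((1 + x) / 2)
    positivity
  rcases eq_or_lt_of_le hd with hd1 | hd2
  · -- d = 1 : empty index type
    subst hd1
    haveI hE : IsEmpty {l : Fin 1 → ℕ // (∀ i j : Fin 1, i ≤ j → l j ≤ l i) ∧ (∑ i, l i) = s ∧
        ∃ i, |(l i : ℝ) - (s : ℝ) / ((1 : ℕ) : ℝ)| > t} := by
      constructor
      rintro ⟨l, hsort, hsum, i, hbad⟩
      have hi : i = 0 := Subsingleton.elim i 0
      have hl : l 0 = s := by rw [← hsum, Fin.sum_univ_one]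
      rw [hi, hl] at hbad
      norm_num at hbad
      linarith
    rw [tsum_empty]
    positivity
  -- now 1 < d
  have hd0 : (0 : ℝ) < (d : ℝ) := by
    have : (0 : ℕ) < d := by omega
    exact_mod_cast this
  set i0 : Fin d := ⟨0, by omega⟩ with hi0def
  set iL : Fin d := ⟨d - 1, by omega⟩ with hiLdef
  have hi0v : (i0 : ℕ) = 0 := rfl
  have hiLv : (iL : ℕ) = d - 1 := rfl
  set Bad : Finset (Fin d → ℕ) :=
    (Finset.piAntidiag (Finset.univ : Finset (Fin d)) s).filter
      (fun l => (∀ i j : Fin d, i ≤ j → l j ≤ l i) ∧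
        ∃ i, |(l i : ℝ) - (s : ℝ) / (d : ℝ)| > t) with hBadDef
  have hmem : ∀ l : Fin d → ℕ, l ∈ Bad ↔ ((∀ i j : Fin d, i ≤ j → l j ≤ l i) ∧ (∑ i, l i) = s ∧
      ∃ i, |(l i : ℝ) - (s : ℝ) / (d : ℝ)| > t) := by
    intro l
    rw [hBadDef, Finset.mem_filter, Finset.mem_piAntidiag]
    constructor
    · rintro ⟨⟨h1, _⟩, h2, h3⟩; exact ⟨h2, h1, h3⟩
    · rintro ⟨h1, h2, h3⟩; exact ⟨⟨h2, fun i _ => Finset.mem_univ i⟩, h1, h3⟩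
  haveI : Fintype {l : Fin d → ℕ // (∀ i j : Fin d, i ≤ j → l j ≤ l i) ∧ (∑ i, l i) = s ∧
      ∃ i, |(l i : ℝ) - (s : ℝ) / (d : ℝ)| > t} := Fintype.ofFinset Bad hmem
  rw [tsum_fintype, ← Finset.sum_subtype Bad hmem (schurWeylProb d s)]
  -- the exponent identity
  have hexp : -(4 * t / s * t) + (s : ℝ) * (4 * t / s) ^ 2 / 8 = -(s : ℝ) ^ x / 2 := by
    have h1 : ((s : ℝ) ^ ((1 + x) / 2)) ^ 2 = (s : ℝ) ^ (1 + x) := by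
      rw [← Real.rpow_natCast ((s : ℝ) ^ ((1 + x) / 2)) 2, ← Real.rpow_mul hs0.le]
      norm_num
    have h2 : (s : ℝ) ^ (1 + x) = (s : ℝ) * (s : ℝ) ^ x := by
      rw [Real.rpow_add hs0, Real.rpow_one]
    have ht2 : t ^ 2 = (s : ℝ) * (s : ℝ) ^ x / 4 := by
      rw [htdef, div_pow, h1, h2]; norm_num
    have hstep : -(4 * t / s * t) + (s : ℝ) * (4 * t / s) ^ 2 / 8 = -(2 * t ^ 2 / s) := by
      field_simp
      ring
    rw [hstep, ht2]
    field_simp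
    ring
  have hθnn : (0 : ℝ) ≤ 4 * t / s := by positivity
  have hup : ∑ k ∈ (Finset.piAntidiag (Finset.univ : Finset (Fin d)) s).filter
        (fun k => (s : ℝ) / d + t < k i0), swW d s k ≤ Real.exp (-(s : ℝ) ^ x / 2) := by
    have h := sw_tail_up d s hd t (4 * t / s) hθnn i0
    rwa [hexp] at h
  have hlow : ∑ k ∈ (Finset.piAntidiag (Finset.univ : Finset (Fin d)) s).filter
        (fun k => (k iL : ℝ) < (s : ℝ) / d - t), swW d s k ≤ Real.exp (-(s : ℝ) ^ x / 2) := by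
    have h := sw_tail_low d s hd t (4 * t / s) hθnn iL
    rwa [hexp] at h
  -- dichotomy for bad diagrams
  have hUL : ∀ l ∈ Bad, ((s : ℝ) / d + t < l i0) ∨ ((l iL : ℝ) < (s : ℝ) / d - t) := by
    intro l hl
    obtain ⟨hsort, hsum, i, hbad⟩ := (hmem l).mp hl
    rcases lt_abs.mp hbad with h | h
    · left
      have : l i ≤ l i0 := hsort i0 i (by rw [Fin.le_def, hi0v]; omega)
      have hc : (l i : ℝ) ≤ (l i0 : ℝ) := by exact_mod_cast this
      linarith
    · right
      have : l iL ≤ l i := hsort i iL (by rw [Fin.le_def, hiLv]; have := i.isLt; omega)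
      have hc : (l iL : ℝ) ≤ (l i : ℝ) := by exact_mod_cast this
      linarith
  have hBadComps : ∀ l ∈ Bad, l ∈ Finset.piAntidiag (Finset.univ : Finset (Fin d)) s := by
    intro l hl
    rw [hBadDef] at hl
    exact Finset.mem_of_mem_filter l hl
  have hRHSnn : (0 : ℝ) ≤ ((s : ℝ) + 1) ^ (d * (d - 1) / 2) := by positivity
  -- case distinction on d = 2 / d ≥ 3
  rcases eq_or_lt_of_le (show 2 ≤ d from hd2) with hd2' | hd3
  · -- d = 2
    have hd2'' : d = 2 := hd2'.symm
    subst hd2''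
    -- Bad ⊆ Up
    have hsub : Bad ⊆ (Finset.piAntidiag (Finset.univ : Finset (Fin 2)) s).filter
        (fun k => (s : ℝ) / (2 : ℕ) + t < k i0) := by
      intro l hl
      rw [Finset.mem_filter]
      refine ⟨hBadComps l hl, ?_⟩
      rcases hUL l hl with h | h
      · exact h
      · obtain ⟨hsort, hsum, _⟩ := (hmem l).mp hl
        have hsum2 : l i0 + l iL = s := by
          rw [← hsum, Fin.sum_univ_two]
          rfl
        have hc : (l i0 : ℝ) + (l iL : ℝ) = s := by exact_mod_cast hsum2
        linarith
    calc ∑ l ∈ Bad, schurWeylProb 2 s l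
        ≤ ∑ l ∈ Bad, ((s : ℝ) + 1) ^ (2 * (2 - 1) / 2) * swW 2 s l := by
          apply Finset.sum_le_sum
          intro l hl
          obtain ⟨hsort, hsum, _⟩ := (hmem l).mp hl
          exact sw_pointwise 2 s (by omega) l hsort hsum
      _ = ((s : ℝ) + 1) ^ (2 * (2 - 1) / 2) * ∑ l ∈ Bad, swW 2 s l := by
          rw [Finset.mul_sum]
      _ ≤ ((s : ℝ) + 1) ^ (2 * (2 - 1) / 2) * Real.exp (-(s : ℝ) ^ x / 2) := by
          apply mul_le_mul_of_nonneg_left ?_ hRHSnn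
          refine le_trans (Finset.sum_le_sum_of_subset_of_nonneg hsub
            (fun k _ _ => swW_nonneg 2 s k)) hup
  · -- 3 ≤ d
    have hd3' : 3 ≤ d := hd3
    by_cases hs1 : s = 1
    · -- s = 1 : at most one bad diagram, weight 1/d ≤ exp(-1/2)
      subst hs1
      have huniq : ∀ l ∈ Bad, l = (fun i : Fin d => if i = i0 then 1 else 0) := by
        intro l hl
        obtain ⟨hsort, hsum, _⟩ := (hmem l).mp hl
        have hle : ∀ i, l i ≤ l i0 := fun i => hsort i0 i (by rw [Fin.le_def, hi0v]; omega)
        have hl0 : l i0 = 1 := by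
          have h1 : l i0 ≤ 1 := sw_ls d 1 l hsum i0
          rcases Nat.le_one_iff_eq_zero_or_eq_one.mp h1 with h0 | h1'
          · exfalso
            have : ∑ i, l i = 0 := Finset.sum_eq_zero (fun i _ => by
              have := hle i; omega)
            omega
          · exact h1'
        have hrest : ∀ i ∈ Finset.univ.erase i0, l i = 0 := by
          have hsplit : l i0 + ∑ i ∈ Finset.univ.erase i0, l i = 1 := by
            rw [Finset.add_sum_erase Finset.univ l (Finset.mem_univ i0), hsum]
          have hzero : ∑ i ∈ Finset.univ.erase i0, l i = 0 := by omega
          intro i hi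
          exact (Finset.sum_eq_zero_iff.mp hzero) i hi
        funext i
        by_cases hii : i = i0
        · rw [hii, if_pos rfl, hl0]
        · rw [if_neg hii]
          exact hrest i (Finset.mem_erase.mpr ⟨hii, Finset.mem_univ i⟩)
      have hsingle : ∑ l ∈ Bad, swW d 1 l ≤ Real.exp (-((1 : ℕ) : ℝ) ^ x / 2) := by
        have hsub : Bad ⊆ {(fun i : Fin d => if i = i0 then 1 else 0)} := by
          intro l hl
          rw [Finset.mem_singleton]
          exact huniq l hl
        have hW : swW d 1 (fun i : Fin d => if i = i0 then 1 else 0) = (d : ℝ)⁻¹ := by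
          unfold swW
          have hprod : ∏ i : Fin d, ((((fun i : Fin d => if i = i0 then 1 else 0) i).factorial : ℕ) : ℝ) = 1 := by
            apply Finset.prod_eq_one
            intro i _
            by_cases hii : i = i0 <;> simp [hii]
          rw [hprod]
          simp [Nat.factorial_one]
        have hexp12 : Real.exp (-((1 : ℕ) : ℝ) ^ x / 2) = Real.exp (-(1 / 2)) := by
          norm_num [Real.one_rpow]
        have hd3r : (3 : ℝ) ≤ (d : ℝ) := by exact_mod_cast hd3'
        have hehalf : Real.exp ((1 : ℝ) / 2) < 3 := by
          have hsq : Real.exp ((1 : ℝ) / 2) * Real.exp ((1 : ℝ) / 2) = Real.exp 1 := by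
            rw [← Real.exp_add]; norm_num
          nlinarith [Real.exp_one_lt_d9, Real.exp_pos ((1 : ℝ) / 2)]
        have hinv : (d : ℝ)⁻¹ ≤ Real.exp (-(1 / 2)) := by
          rw [Real.exp_neg]
          apply inv_anti₀ (Real.exp_pos _)
          calc Real.exp ((1:ℝ)/2) ≤ 3 := hehalf.le
            _ ≤ (d : ℝ) := hd3r
        calc ∑ l ∈ Bad, swW d 1 l
            ≤ ∑ l ∈ ({(fun i : Fin d => if i = i0 then 1 else 0)} : Finset (Fin d → ℕ)), swW d 1 l :=
              Finset.sum_le_sum_of_subset_of_nonneg hsub (fun k _ _ => swW_nonneg d 1 k)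
          _ = swW d 1 (fun i : Fin d => if i = i0 then 1 else 0) := Finset.sum_singleton _ _
          _ = (d : ℝ)⁻¹ := hW
          _ ≤ Real.exp (-(1 / 2)) := hinv
          _ = Real.exp (-((1 : ℕ) : ℝ) ^ x / 2) := hexp12.symm
      calc ∑ l ∈ Bad, schurWeylProb d 1 l
          ≤ ∑ l ∈ Bad, (((1 : ℕ) : ℝ) + 1) ^ (d * (d - 1) / 2) * swW d 1 l := by
            apply Finset.sum_le_sum
            intro l hl
            obtain ⟨hsort, hsum, _⟩ := (hmem l).mp hl
            exact sw_pointwise d 1 (by omega) l hsort hsum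
        _ = (((1 : ℕ) : ℝ) + 1) ^ (d * (d - 1) / 2) * ∑ l ∈ Bad, swW d 1 l := by
            rw [Finset.mul_sum]
        _ ≤ (((1 : ℕ) : ℝ) + 1) ^ (d * (d - 1) / 2) * Real.exp (-((1 : ℕ) : ℝ) ^ x / 2) :=
            mul_le_mul_of_nonneg_left hsingle hRHSnn
    · -- 3 ≤ d, 2 ≤ s
      have hs2 : 2 ≤ s := by omega
      have hsr2 : (2 : ℝ) ≤ (s : ℝ) := by exact_mod_cast hs2
      have hsplit := Finset.sum_filter_add_sum_filter_not Bad
        (fun k : Fin d → ℕ => (s : ℝ) / d + t < (k i0 : ℝ)) (swW d s)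
      have hsubU : Bad.filter (fun k : Fin d → ℕ => (s : ℝ) / d + t < (k i0 : ℝ))
          ⊆ (Finset.piAntidiag (Finset.univ : Finset (Fin d)) s).filter
            (fun k => (s : ℝ) / d + t < k i0) := by
        intro l hl
        rw [Finset.mem_filter] at hl ⊢
        exact ⟨hBadComps l hl.1, hl.2⟩
      have hsubL : Bad.filter (fun k : Fin d → ℕ => ¬ ((s : ℝ) / d + t < (k i0 : ℝ)))
          ⊆ (Finset.piAntidiag (Finset.univ : Finset (Fin d)) s).filter
            (fun k => (k iL : ℝ) < (s : ℝ) / d - t) := by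
        intro l hl
        rw [Finset.mem_filter] at hl ⊢
        refine ⟨hBadComps l hl.1, ?_⟩
        rcases hUL l hl.1 with h | h
        · exact absurd h hl.2
        · exact h
      have hBadW : ∑ l ∈ Bad, swW d s l ≤ 2 * Real.exp (-(s : ℝ) ^ x / 2) := by
        rw [← hsplit]
        have h1 := le_trans (Finset.sum_le_sum_of_subset_of_nonneg hsubU
          (fun k _ _ => swW_nonneg d s k)) hup
        have h2 := le_trans (Finset.sum_le_sum_of_subset_of_nonneg hsubL
          (fun k _ _ => swW_nonneg d s k)) hlow
        linarith
      have hkey : 2 * ((((s : ℝ) + 2) / (2 * ((s : ℝ) + 1))) ^ 2) ≤ 1 := by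
        rw [div_pow, ← mul_div_assoc, div_le_one (by positivity)]
        nlinarith
      have hepos : (0 : ℝ) < Real.exp (-(s : ℝ) ^ x / 2) := Real.exp_pos _
      calc ∑ l ∈ Bad, schurWeylProb d s l
          ≤ ∑ l ∈ Bad, (((s : ℝ) + 2) / (2 * ((s : ℝ) + 1))) ^ 2 *
              (((s : ℝ) + 1) ^ (d * (d - 1) / 2) * swW d s l) := by
            apply Finset.sum_le_sum
            intro l hl
            obtain ⟨hsort, hsum, _⟩ := (hmem l).mp hl
            exact sw_pointwise3 d s hd3' l hsort hsum
        _ = (((s : ℝ) + 2) / (2 * ((s : ℝ) + 1))) ^ 2 *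
              (((s : ℝ) + 1) ^ (d * (d - 1) / 2) * ∑ l ∈ Bad, swW d s l) := by
            rw [← Finset.mul_sum, ← Finset.mul_sum]
        _ ≤ (((s : ℝ) + 2) / (2 * ((s : ℝ) + 1))) ^ 2 *
              (((s : ℝ) + 1) ^ (d * (d - 1) / 2) * (2 * Real.exp (-(s : ℝ) ^ x / 2))) := by
            apply mul_le_mul_of_nonneg_left ?_ (by positivity)
            exact mul_le_mul_of_nonneg_left hBadW hRHSnn
        _ ≤ ((s : ℝ) + 1) ^ (d * (d - 1) / 2) * Real.exp (-(s : ℝ) ^ x / 2) := by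
            have hrw : (((s : ℝ) + 2) / (2 * ((s : ℝ) + 1))) ^ 2 *
                (((s : ℝ) + 1) ^ (d * (d - 1) / 2) * (2 * Real.exp (-(s : ℝ) ^ x / 2)))
                = (((s : ℝ) + 1) ^ (d * (d - 1) / 2) * Real.exp (-(s : ℝ) ^ x / 2)) *
                  (2 * ((((s : ℝ) + 2) / (2 * ((s : ℝ) + 1))) ^ 2)) := by ring
            rw [hrw]
            calc (((s : ℝ) + 1) ^ (d * (d - 1) / 2) * Real.exp (-(s : ℝ) ^ x / 2)) *
                  (2 * ((((s : ℝ) + 2) / (2 * ((s : ℝ) + 1))) ^ 2))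
                ≤ (((s : ℝ) + 1) ^ (d * (d - 1) / 2) * Real.exp (-(s : ℝ) ^ x / 2)) * 1 :=
                  mul_le_mul_of_nonneg_left hkey (by positivity)
              _ = ((s : ℝ) + 1) ^ (d * (d - 1) / 2) * Real.exp (-(s : ℝ) ^ x / 2) := mul_one _
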